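/- arXiv:2007.05108 — 2 statements merged into one kernel-verified Lean document; each statement's English description precedes it below -/
import Mathlib

section
/- (Riddell's formula) The identity of formal power series over ℚ holds: 1 + Σ_{n≥1} G_n · xⁿ/n! = exp( Σ_{n≥1} CG_n · xⁿ/n! ), where G_n = 2^{C(n,2)} is the number of labelled simple graphs on vertex set [n] and CG_n is the number of connected labelled simple graphs on vertex set [n]. -/
open BigOperators

/-- The number of connected labelled simple graphs on vertex set `[k]`. -/
noncomputable def CG (k : ℕ) : ℕ := Nat.card {G : SimpleGraph (Fin k) // G.Connected}

/-- Exponential of a formal power series (with zero constant term):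
`exp f = Σ_{c≥0} f^c / c!`; the `n`-th coefficient only involves `c ≤ n`. -/
noncomputable def expPS (f : PowerSeries ℚ) : PowerSeries ℚ :=
  PowerSeries.mk fun n =>
    PowerSeries.coeff (R := ℚ) n (∑ c ∈ Finset.range (n + 1), (c.factorial : ℚ)⁻¹ • f ^ c)

/-! ### Combinatorial part: counting labelled graphs -/

section Graphs

open SimpleGraph

/-- The simple graphs on `α` biject with Prop-functions on off-diagonal `Sym2`s. -/
def graphEquiv (α : Type*) : SimpleGraph α ≃ ({ e : Sym2 α // ¬ e.IsDiag } → Prop) where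
  toFun G e := e.1 ∈ G.edgeSet
  invFun f := SimpleGraph.fromEdgeSet {e | ∃ h : ¬ e.IsDiag, f ⟨e, h⟩}
  left_inv G := by
    ext v w
    simp only [fromEdgeSet_adj, Set.mem_setOf_eq, mem_edgeSet]
    constructor
    · rintro ⟨⟨_, h⟩, _⟩; exact h
    · intro h
      exact ⟨⟨fun hd => (G.ne_of_adj h) (Sym2.mk_isDiag_iff.mp hd), h⟩, G.ne_of_adj h⟩
  right_inv f := by
    funext e
    obtain ⟨e, he⟩ := e
    induction e with
    | _ v w =>
      simp only [mem_edgeSet, fromEdgeSet_adj, Set.mem_setOf_eq, eq_iff_iff]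
      constructor
      · rintro ⟨⟨h, hf⟩, _⟩; exact hf
      · intro hf
        exact ⟨⟨he, hf⟩, fun h => he (by simp [h])⟩

lemma nat_card_simpleGraph (α : Type*) [Fintype α] :
    Nat.card (SimpleGraph α) = 2 ^ ((Nat.card α).choose 2) := by
  classical
  rw [Nat.card_congr (graphEquiv α), Nat.card_fun, Nat.card_eq_fintype_card,
    Nat.card_eq_fintype_card, Nat.card_eq_fintype_card, Fintype.card_prop,
    Sym2.card_subtype_not_diag]

lemma nat_card_connected (α : Type*) [Finite α] :
    Nat.card {G : SimpleGraph α // G.Connected} = CG (Nat.card α) := by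
  classical
  have e : α ≃ Fin (Nat.card α) := Finite.equivFin α
  refine Nat.card_congr (Equiv.subtypeEquiv e.simpleGraph fun G => ?_)
  have : (e.simpleGraph G) = G.comap e.symm.toEmbedding := rfl
  rw [this]
  exact ((SimpleGraph.Iso.comap e.symm G).connected_iff).symm

variable {V : Type*} {s : Set V}

/-- Glue a graph on `s` and a graph on `sᶜ` into a graph on `V` with no cross edges. -/
def glue (H : SimpleGraph s) (K : SimpleGraph ↥(sᶜ)) : SimpleGraph V where
  Adj a b := (∃ (ha : a ∈ s) (hb : b ∈ s), H.Adj ⟨a, ha⟩ ⟨b, hb⟩) ∨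
             (∃ (ha : a ∈ sᶜ) (hb : b ∈ sᶜ), K.Adj ⟨a, ha⟩ ⟨b, hb⟩)
  symm := ⟨fun a b => by
    rintro (⟨ha, hb, h⟩ | ⟨ha, hb, h⟩)
    exacts [Or.inl ⟨hb, ha, h.symm⟩, Or.inr ⟨hb, ha, h.symm⟩]⟩
  loopless := ⟨fun a => by
    rintro (⟨ha, hb, h⟩ | ⟨ha, hb, h⟩) <;> exact h.ne rfl⟩

lemma glue_walk_mem {H : SimpleGraph s} {K : SimpleGraph ↥(sᶜ)} :
    ∀ {a b : V}, (glue H K).Walk a b → a ∈ s → b ∈ s := by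
  intro a b p
  induction p with
  | nil => exact id
  | cons h p ih =>
    intro ha
    rcases h with ⟨_, hb, _⟩ | ⟨ha', _, _⟩
    · exact ih hb
    · exact absurd ha ha'

lemma glue_supp {H : SimpleGraph s} {K : SimpleGraph ↥(sᶜ)} (hH : H.Connected)
    {v₀ : V} (hv : v₀ ∈ s) :
    ((glue H K).connectedComponentMk v₀).supp = s := by
  ext x
  rw [ConnectedComponent.mem_supp_iff, ConnectedComponent.eq]
  constructor
  · intro h
    exact glue_walk_mem h.symm.some hv
  · intro hx
    have key : ∀ {x y : ↥s}, H.Walk x y → (glue H K).Reachable x.1 y.1 := by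
      intro x y p
      induction p with
      | nil => exact Reachable.refl _
      | @cons u w y h p ih =>
        have : (glue H K).Adj u.1 w.1 := Or.inl ⟨u.2, w.2, by simpa using h⟩
        exact this.reachable.trans ih
    exact key ((hH.preconnected ⟨x, hx⟩ ⟨v₀, hv⟩).some)

lemma no_cross {G : SimpleGraph V} {v₀ : V}
    (hG : (G.connectedComponentMk v₀).supp = s) {a b : V}
    (ha : a ∈ s) (hb : b ∉ s) : ¬ G.Adj a b := by
  intro h
  apply hb
  rw [← hG, ConnectedComponent.mem_supp_iff] at ha ⊢
  rw [← ha]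
  exact (ConnectedComponent.connectedComponentMk_eq_of_adj h.symm)

lemma glue_induce {G : SimpleGraph V} {v₀ : V}
    (hG : (G.connectedComponentMk v₀).supp = s) :
    glue (G.induce s) (G.induce (sᶜ : Set V)) = G := by
  ext a b
  show (∃ (ha : a ∈ s) (hb : b ∈ s), G.Adj a b) ∨
       (∃ (ha : a ∈ sᶜ) (hb : b ∈ sᶜ), G.Adj a b) ↔ G.Adj a b
  constructor
  · rintro (⟨_, _, h⟩ | ⟨_, _, h⟩) <;> exact h
  · intro h
    by_cases ha : a ∈ s <;> by_cases hb : b ∈ s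
    · exact Or.inl ⟨ha, hb, h⟩
    · exact absurd h (no_cross hG ha hb)
    · exact absurd h.symm (no_cross hG hb ha)
    · exact Or.inr ⟨ha, hb, h⟩

lemma induce_glue_left {H : SimpleGraph s} {K : SimpleGraph ↥(sᶜ)} :
    (glue H K).induce s = H := by
  ext ⟨a, ha⟩ ⟨b, hb⟩
  show (glue H K).Adj a b ↔ _
  constructor
  · rintro (⟨ha', hb', h⟩ | ⟨ha', _, _⟩)
    · exact h
    · exact absurd ha ha'
  · intro h
    exact Or.inl ⟨ha, hb, h⟩

lemma induce_glue_right {H : SimpleGraph s} {K : SimpleGraph ↥(sᶜ)} :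
    (glue H K).induce (sᶜ : Set V) = K := by
  ext ⟨a, ha⟩ ⟨b, hb⟩
  show (glue H K).Adj a b ↔ _
  constructor
  · rintro (⟨ha', _, _⟩ | ⟨ha', hb', h⟩)
    · exact absurd ha' ha
    · exact h
  · intro h
    exact Or.inr ⟨ha, hb, h⟩

lemma supp_induce_connected {G : SimpleGraph V} {v₀ : V}
    (hG : (G.connectedComponentMk v₀).supp = s) : (G.induce s).Connected := by
  have hv : v₀ ∈ s := by
    rw [← hG, ConnectedComponent.mem_supp_iff]
  classical
  apply G.induce_connected_of_patches v₀ hv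
  intro v hv'
  rw [← hG, ConnectedComponent.mem_supp_iff, ConnectedComponent.eq] at hv'
  obtain ⟨p⟩ := hv'.symm
  refine ⟨{x | x ∈ p.support}, ?_, p.start_mem_support, p.end_mem_support, ?_⟩
  · intro x hx
    rw [← hG, ConnectedComponent.mem_supp_iff, ConnectedComponent.eq]
    exact ⟨(p.takeUntil x hx).reverse⟩
  · exact p.connected_induce_support.preconnected _ _

/-- The fiber of graphs whose component of `v₀` has support `s`. -/
def fiberEquiv {v₀ : V} (hv : v₀ ∈ s) :
    {G : SimpleGraph V // (G.connectedComponentMk v₀).supp = s} ≃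
      {H : SimpleGraph s // H.Connected} × SimpleGraph ↥(sᶜ) where
  toFun G := (⟨G.1.induce s, supp_induce_connected G.2⟩, G.1.induce (sᶜ : Set V))
  invFun HK := ⟨glue HK.1.1 HK.2, glue_supp HK.1.2 hv⟩
  left_inv G := Subtype.ext (glue_induce G.2)
  right_inv HK := by
    obtain ⟨⟨H, hH⟩, K⟩ := HK
    refine Prod.ext (Subtype.ext ?_) ?_
    · exact induce_glue_left
    · exact induce_glue_right

section opt
variable {n : ℕ}

/-- Extend a set `s ⊆ Fin n` by the point `none`. -/
def extSet (s : Set (Fin n)) : Set (Option (Fin n)) := {y | ∀ x, y = some x → x ∈ s}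

@[simp] lemma none_mem_extSet {s : Set (Fin n)} : (none : Option (Fin n)) ∈ extSet s := by
  intro x h; cases h

@[simp] lemma some_mem_extSet {s : Set (Fin n)} {x : Fin n} :
    some x ∈ extSet s ↔ x ∈ s := by
  constructor
  · exact fun h => h x rfl
  · rintro h y hy; cases hy; exact h

def extSetEquiv (s : Set (Fin n)) : ↥(extSet s) ≃ Option ↥s where
  toFun y := match y with
    | ⟨none, _⟩ => none
    | ⟨some x, h⟩ => some ⟨x, some_mem_extSet.mp h⟩
  invFun o := match o with
    | none => ⟨none, none_mem_extSet⟩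
    | some x => ⟨some x.1, some_mem_extSet.mpr x.2⟩
  left_inv y := by rcases y with ⟨_ | x, h⟩ <;> rfl
  right_inv o := by rcases o with _ | ⟨x, hx⟩ <;> rfl

def extSetComplEquiv (s : Set (Fin n)) : ↥((extSet s)ᶜ) ≃ ↥(sᶜ) where
  toFun y := match y with
    | ⟨none, h⟩ => absurd none_mem_extSet h
    | ⟨some x, h⟩ => ⟨x, fun hx => h (some_mem_extSet.mpr hx)⟩
  invFun x := ⟨some x.1, fun h => x.2 (some_mem_extSet.mp h)⟩
  left_inv y := by
    rcases y with ⟨_ | x, h⟩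
    · exact absurd none_mem_extSet h
    · rfl
  right_inv x := rfl

lemma card_extSet (s : Set (Fin n)) : Nat.card ↥(extSet s) = Nat.card s + 1 := by
  rw [Nat.card_congr (extSetEquiv s)]
  simp [Nat.card_eq_fintype_card]

lemma card_extSet_compl (s : Set (Fin n)) : Nat.card ↥((extSet s)ᶜ) = n - Nat.card s := by
  classical
  rw [Nat.card_congr (extSetComplEquiv s), Nat.card_eq_fintype_card, Nat.card_eq_fintype_card,
    Fintype.card_compl_set, Fintype.card_fin]

end opt

lemma nat_card_sigma' {ι : Type*} [Fintype ι] (f : ι → Type*) [∀ i, Finite (f i)] :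
    Nat.card (Σ i, f i) = ∑ i, Nat.card (f i) := by
  classical
  letI : ∀ i, Fintype (f i) := fun i => Fintype.ofFinite _
  simp only [Nat.card_eq_fintype_card]
  exact Fintype.card_sigma

lemma nat_card_fiber {V : Type*} [Finite V] {s : Set V} {v₀ : V} (hv : v₀ ∈ s) :
    Nat.card {G : SimpleGraph V // (G.connectedComponentMk v₀).supp = s}
      = CG (Nat.card s) * 2 ^ ((Nat.card ↥(sᶜ)).choose 2) := by
  classical
  have := Fintype.ofFinite V
  rw [Nat.card_congr (fiberEquiv hv), Nat.card_prod, nat_card_connected,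
    nat_card_simpleGraph]

/-- Key combinatorial recurrence: classify graphs on `n+1` vertices by the
connected component of a distinguished vertex. -/
lemma keyA (n : ℕ) :
    2 ^ ((n+1).choose 2)
      = ∑ j ∈ Finset.range (n+1), n.choose j * (CG (j+1) * 2 ^ ((n-j).choose 2)) := by
  classical
  have h1 : Nat.card (SimpleGraph (Option (Fin n))) = 2 ^ ((n+1).choose 2) := by
    rw [nat_card_simpleGraph]
    congr 2
    simp [Nat.card_eq_fintype_card]
  have hiff : ∀ (G : SimpleGraph (Option (Fin n))) (s : Set (Fin n)),
      (G.connectedComponentMk none).supp = extSet s ↔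
        {x | some x ∈ (G.connectedComponentMk none).supp} = s := by
    intro G s
    constructor
    · intro h
      ext x
      simp [h]
    · intro h
      ext y
      rcases y with _ | x
      · simp [SimpleGraph.ConnectedComponent.mem_supp_iff]
      · rw [some_mem_extSet, ← h]
        simp
  have e : (Σ s : Set (Fin n), {G : SimpleGraph (Option (Fin n)) //
        (G.connectedComponentMk none).supp = extSet s}) ≃ SimpleGraph (Option (Fin n)) :=
    (Equiv.sigmaCongrRight fun s => Equiv.subtypeEquivRight fun G => hiff G s).trans
      (Equiv.sigmaFiberEquiv _)
  have h2 : Nat.card (SimpleGraph (Option (Fin n)))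
      = ∑ s : Set (Fin n),
          Nat.card {G : SimpleGraph (Option (Fin n)) //
            (G.connectedComponentMk none).supp = extSet s} := by
    rw [← Nat.card_congr e, nat_card_sigma']
  have h3 : ∀ s : Set (Fin n),
      Nat.card {G : SimpleGraph (Option (Fin n)) //
          (G.connectedComponentMk none).supp = extSet s}
        = CG (Nat.card s + 1) * 2 ^ ((n - Nat.card s).choose 2) := by
    intro s
    rw [nat_card_fiber none_mem_extSet, card_extSet, card_extSet_compl]
  rw [← h1, h2]
  simp only [h3]
  calc ∑ s : Set (Fin n), CG (Nat.card ↥s + 1) * 2 ^ ((n - Nat.card ↥s).choose 2)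
      = ∑ t : Finset (Fin n), CG (t.card + 1) * 2 ^ ((n - t.card).choose 2) := by
        rw [← Equiv.sum_comp (Fintype.finsetEquivSet)
          (fun s : Set (Fin n) => CG (Nat.card ↥s + 1) * 2 ^ ((n - Nat.card ↥s).choose 2))]
        refine Finset.sum_congr rfl fun t _ => ?_
        have : Nat.card ↥(Fintype.finsetEquivSet t) = t.card := by
          simp [Fintype.finsetEquivSet, Nat.card_coe_set_eq, Set.ncard_coe_finset]
        rw [this]
    _ = ∑ t ∈ (Finset.univ : Finset (Fin n)).powerset,
          CG (t.card + 1) * 2 ^ ((n - t.card).choose 2) := by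
        rw [Finset.powerset_univ]
    _ = ∑ j ∈ Finset.range (n+1), n.choose j * (CG (j+1) * 2 ^ ((n-j).choose 2)) := by
        rw [Finset.sum_powerset_apply_card
          (fun m => CG (m + 1) * 2 ^ ((n - m).choose 2))]
        simp [Finset.card_univ, smul_eq_mul]

end Graphs

/-! ### Power series part -/

open PowerSeries

variable {f : ℚ⟦X⟧}

lemma coeff_pow_zero_of_lt (hf : constantCoeff f = 0) :
    ∀ (c m : ℕ), m < c → coeff m (f ^ c) = 0 := by
  intro c
  induction c with
  | zero => exact fun m hm => absurd hm (Nat.not_lt_zero m)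
  | succ c ih =>
    intro m hm
    rw [pow_succ', coeff_mul]
    refine Finset.sum_eq_zero fun p hp => ?_
    rw [Finset.HasAntidiagonal.mem_antidiagonal] at hp
    rcases Nat.eq_zero_or_pos p.1 with h | h
    · rw [h, coeff_zero_eq_constantCoeff, hf, zero_mul]
    · have : p.2 < c := by omega
      rw [ih p.2 this, mul_zero]

lemma coeff_expPS_stable (hf : constantCoeff f = 0) {m N : ℕ} (h : m ≤ N) :
    coeff m (∑ c ∈ Finset.range (N + 1), (c.factorial : ℚ)⁻¹ • f ^ c)
      = coeff m (expPS f) := by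
  rw [expPS, coeff_mk, map_sum, map_sum]
  refine (Finset.sum_subset (Finset.range_subset_range.mpr (by omega : m + 1 ≤ N + 1))
    fun c hc hc' => ?_).symm
  rw [Finset.mem_range, not_lt] at hc'
  rw [map_smul, coeff_pow_zero_of_lt hf c m (by omega), smul_zero]

lemma coeff_zero_expPS (f : ℚ⟦X⟧) : coeff 0 (expPS f) = 1 := by
  rw [expPS, coeff_mk]
  simp

lemma expPS_ode (hf : constantCoeff f = 0) (n : ℕ) :
    ((n : ℚ) + 1) * coeff (n + 1) (expPS f)
      = ∑ j ∈ Finset.range (n + 1),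
          (coeff (j + 1) f * ((j : ℚ) + 1)) * coeff (n - j) (expPS f) := by
  rw [← coeff_expPS_stable hf (by omega : n + 1 ≤ n + 1), map_sum, Finset.mul_sum]
  have h2 : ∀ c ∈ Finset.range (n + 2),
      ((n : ℚ) + 1) * coeff (n + 1) ((c.factorial : ℚ)⁻¹ • f ^ c)
        = (c.factorial : ℚ)⁻¹ * coeff n (d⁄dX ℚ (f ^ c)) := by
    intro c _
    rw [map_smul, coeff_derivative, smul_eq_mul]
    ring
  rw [Finset.sum_congr rfl h2, Finset.sum_range_succ']
  have h0 : ((Nat.factorial 0 : ℕ) : ℚ)⁻¹ * coeff n (d⁄dX ℚ ((f : ℚ⟦X⟧) ^ (0:ℕ))) = 0 := by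
    simp
  rw [h0, add_zero]
  have h3 : ∀ j : ℕ, ((Nat.factorial (j+1) : ℕ) : ℚ)⁻¹ * coeff n (d⁄dX ℚ (f ^ (j+1)))
      = (j.factorial : ℚ)⁻¹ * coeff n (d⁄dX ℚ f * f ^ j) := by
    intro j
    rw [Derivation.leibniz_pow, Nat.add_sub_cancel, smul_eq_mul,
      mul_comm (f ^ j) (d⁄dX ℚ f), map_nsmul, nsmul_eq_mul, Nat.factorial_succ]
    have hj : (j.factorial : ℚ) ≠ 0 := Nat.cast_ne_zero.mpr j.factorial_ne_zero
    push_cast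
    field_simp
  rw [Finset.sum_congr rfl fun j _ => h3 j]
  have h4 : ∀ j : ℕ, (j.factorial : ℚ)⁻¹ * coeff n (d⁄dX ℚ f * f ^ j)
      = ∑ p ∈ Finset.HasAntidiagonal.antidiagonal n,
          coeff p.1 (d⁄dX ℚ f) * ((j.factorial : ℚ)⁻¹ * coeff p.2 (f ^ j)) := by
    intro j
    rw [coeff_mul, Finset.mul_sum]
    exact Finset.sum_congr rfl fun p _ => by ring
  rw [Finset.sum_congr rfl fun j _ => h4 j, Finset.sum_comm]
  have h5 : ∀ p ∈ Finset.HasAntidiagonal.antidiagonal n,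
      ∑ j ∈ Finset.range (n + 1),
          coeff p.1 (d⁄dX ℚ f) * ((j.factorial : ℚ)⁻¹ * coeff p.2 (f ^ j))
        = coeff p.1 (d⁄dX ℚ f) * coeff p.2 (expPS f) := by
    intro p hp
    rw [Finset.HasAntidiagonal.mem_antidiagonal] at hp
    rw [← Finset.mul_sum]
    congr 1
    have hcongr : ∀ j ∈ Finset.range (n+1), (j.factorial : ℚ)⁻¹ * coeff p.2 (f ^ j)
        = coeff p.2 ((j.factorial : ℚ)⁻¹ • f ^ j) := by
      intro j _
      rw [map_smul, smul_eq_mul]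
    rw [Finset.sum_congr rfl hcongr, ← map_sum,
      coeff_expPS_stable hf (by omega : p.2 ≤ n)]
  rw [Finset.sum_congr rfl h5, Finset.Nat.sum_antidiagonal_eq_sum_range_succ_mk]
  exact Finset.sum_congr rfl fun j hj => by rw [coeff_derivative]

/-! ### Arithmetic recurrence for the graph-counting EGF coefficients -/

/-- `a m = 2^(C(m,2))/m!`, the coefficients of the EGF of all labelled graphs. -/
noncomputable def aegf (m : ℕ) : ℚ := (2 ^ m.choose 2 : ℕ) / (m.factorial : ℚ)

lemma aegf_zero : aegf 0 = 1 := by simp [aegf]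

lemma aegf_rec (n : ℕ) :
    ((n : ℚ) + 1) * aegf (n + 1)
      = ∑ j ∈ Finset.range (n + 1),
          ((CG (j+1) : ℚ) / ((j+1).factorial : ℚ) * ((j : ℚ) + 1)) * aegf (n - j) := by
  have hterm : ∀ j ∈ Finset.range (n + 1),
      ((CG (j+1) : ℚ) / ((j+1).factorial : ℚ) * ((j : ℚ) + 1)) * aegf (n - j)
        = ((n.choose j * (CG (j+1) * 2 ^ ((n-j).choose 2)) : ℕ) : ℚ) / (n.factorial : ℚ) := by
    intro j hj
    rw [Finset.mem_range] at hj
    have hjn : j ≤ n := by omega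
    rw [aegf]
    push_cast
    rw [Nat.cast_choose ℚ hjn, Nat.factorial_succ]
    have h1 : (j.factorial : ℚ) ≠ 0 := Nat.cast_ne_zero.mpr j.factorial_ne_zero
    have h2 : ((n-j).factorial : ℚ) ≠ 0 := Nat.cast_ne_zero.mpr (n-j).factorial_ne_zero
    have h3 : (n.factorial : ℚ) ≠ 0 := Nat.cast_ne_zero.mpr n.factorial_ne_zero
    have h4 : ((j : ℚ) + 1) ≠ 0 := by positivity
    push_cast
    field_simp
  rw [Finset.sum_congr rfl hterm, ← Finset.sum_div, ← Nat.cast_sum, ← keyA n]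
  rw [aegf, Nat.factorial_succ]
  have h3 : (n.factorial : ℚ) ≠ 0 := Nat.cast_ne_zero.mpr n.factorial_ne_zero
  have h4 : ((n : ℚ) + 1) ≠ 0 := by positivity
  push_cast
  field_simp

/-! ### Main theorem -/

/-- Riddell's formula: `1 + Σ_{n≥1} G_n xⁿ/n! = exp(Σ_{n≥1} CG_n xⁿ/n!)`. -/
theorem riddell_formula :
    1 + PowerSeries.mk
        (fun n => if n = 0 then 0 else ((2 ^ n.choose 2 : ℕ) : ℚ) / (n.factorial : ℚ)) =
      expPS (PowerSeries.mk fun n =>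
        if n = 0 then 0 else (CG n : ℚ) / (n.factorial : ℚ)) := by
  set f : ℚ⟦X⟧ := PowerSeries.mk fun n =>
    if n = 0 then 0 else (CG n : ℚ) / (n.factorial : ℚ) with hfdef
  have hf : constantCoeff f = 0 := by
    rw [← coeff_zero_eq_constantCoeff, hfdef, coeff_mk, if_pos rfl]
  have key : ∀ n, coeff n (expPS f) = aegf n := by
    intro n
    induction n using Nat.strong_induction_on with
    | _ n ih =>
      match n with
      | 0 => rw [coeff_zero_expPS, aegf_zero]
      | Nat.succ n =>
        have hode := expPS_ode hf n
        have hodeR : ∑ j ∈ Finset.range (n + 1),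
            (coeff (j + 1) f * ((j : ℚ) + 1)) * coeff (n - j) (expPS f)
            = ∑ j ∈ Finset.range (n + 1),
              ((CG (j+1) : ℚ) / ((j+1).factorial : ℚ) * ((j : ℚ) + 1)) * aegf (n - j) := by
          refine Finset.sum_congr rfl fun j hj => ?_
          rw [hfdef, coeff_mk, if_neg (Nat.succ_ne_zero j), ih (n - j) (by omega)]
        rw [hodeR, ← aegf_rec n] at hode
        have hne : ((n : ℚ) + 1) ≠ 0 := by positivity
        exact mul_left_cancel₀ hne hode
  ext n
  rw [key n, map_add, coeff_mk, coeff_one]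
  rcases n with _ | n
  · simp [aegf_zero]
  · rw [if_neg (Nat.succ_ne_zero n), if_neg (Nat.succ_ne_zero n), zero_add, aegf]
end

section
/- Let F be a field and G = ([n], E) a labelled simple graph, with 𝒜_G ≤ Λ(n,F) the alternating matrix space spanned by the elementary alternating matrices A_{i,j} for {i,j} ∈ E. Then the independence number of G equals the totally-isotropic number of 𝒜_G, i.e., α(G) = α(𝒜_G). -/
open Matrix BigOperators

/-- The elementary alternating matrix `A_{i,j}`. -/
def elemAlt (n : ℕ) (F : Type) [Field F] (i j : Fin n) : Matrix (Fin n) (Fin n) F :=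
  Matrix.single i j 1 - Matrix.single j i 1

/-- The alternating matrix space `𝒜_G` spanned by the elementary alternating matrices of the
edges of a graph `G`. -/
def graphSpace (n : ℕ) (F : Type) [Field F] (G : SimpleGraph (Fin n)) :
    Submodule F (Matrix (Fin n) (Fin n) F) :=
  Submodule.span F {A | ∃ i j, G.Adj i j ∧ A = elemAlt n F i j}

lemma dot_std {n : ℕ} {F : Type} [Field F] (u u' : Fin n → F) (i j : Fin n) (c : F) :
    u ⬝ᵥ (Matrix.single i j c) *ᵥ u' = u i * (c * u' j) := by
  simp [dotProduct, mulVec, Matrix.single, Finset.sum_ite_eq, ite_and, mul_comm]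

lemma dot_elemAlt {n : ℕ} {F : Type} [Field F] (u u' : Fin n → F) (i j : Fin n) :
    u ⬝ᵥ (elemAlt n F i j) *ᵥ u' = u i * u' j - u j * u' i := by
  simp [elemAlt, Matrix.sub_mulVec, dotProduct_sub, dot_std]

/-- Forward direction: an independent set gives a totally isotropic subspace. -/
lemma indep_to_iso (n : ℕ) (F : Type) [Field F] (G : SimpleGraph (Fin n))
    (s : Finset (Fin n)) (hs : ∀ u ∈ s, ∀ v ∈ s, ¬ G.Adj u v) :
    ∃ U : Submodule F (Fin n → F), Module.finrank F U = s.card ∧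
      ∀ u ∈ U, ∀ u' ∈ U, ∀ A ∈ graphSpace n F G, u ⬝ᵥ A *ᵥ u' = 0 := by
  classical
  set v : s → (Fin n → F) := fun i => Pi.single (i : Fin n) (1 : F) with hv
  have hli : LinearIndependent F v := by
    have := (Pi.basisFun F (Fin n)).linearIndependent
    have h2 := this.comp (Subtype.val : s → Fin n) Subtype.val_injective
    convert h2 using 1
    funext i
    simp [v, Pi.basisFun_apply]
  refine ⟨Submodule.span F (Set.range v), ?_, ?_⟩
  · rw [finrank_span_eq_card hli, Fintype.card_coe]
  · have key : ∀ A ∈ graphSpace n F G, ∀ u ∈ Submodule.span F (Set.range v),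
        ∀ u' ∈ Submodule.span F (Set.range v), u ⬝ᵥ A *ᵥ u' = 0 := by
      intro A hA
      induction hA using Submodule.span_induction with
      | mem A hAmem =>
        obtain ⟨a, b, hab, rfl⟩ := hAmem
        intro u hu
        induction hu using Submodule.span_induction with
        | mem x hx =>
            intro u' hu'
            induction hu' using Submodule.span_induction with
            | mem y hy =>
                obtain ⟨⟨i, hi⟩, rfl⟩ := hx
                obtain ⟨⟨j, hj⟩, rfl⟩ := hy
                rw [dot_elemAlt]
                have hz1 : v ⟨i, hi⟩ a * v ⟨j, hj⟩ b = 0 := by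
                  simp only [v]
                  by_cases h : i = a
                  · have hjb : b ≠ j := by
                      intro hbj
                      exact hs i hi j hj (by rw [h, ← hbj]; exact hab)
                    rw [Pi.single_eq_of_ne hjb, mul_zero]
                  · rw [Pi.single_eq_of_ne (fun h' => h h'.symm), zero_mul]
                have hz2 : v ⟨i, hi⟩ b * v ⟨j, hj⟩ a = 0 := by
                  simp only [v]
                  by_cases h : i = b
                  · have hja : a ≠ j := by
                      intro haj
                      exact hs j hj i hi (by rw [← haj, h]; exact hab)
                    rw [Pi.single_eq_of_ne hja, mul_zero]
                  · rw [Pi.single_eq_of_ne (fun h' => h h'.symm), zero_mul]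
                rw [hz1, hz2, sub_zero]
            | zero => simp
            | add y z _ _ hy hz => rw [mulVec_add, dotProduct_add, hy, hz, add_zero]
            | smul c y _ hy => rw [mulVec_smul, dotProduct_smul, hy, smul_zero]
        | zero => intro u' hu'; simp
        | add x y _ _ hx hy =>
            intro u' hu'
            rw [add_dotProduct, hx u' hu', hy u' hu', add_zero]
        | smul c x _ hx =>
            intro u' hu'
            rw [smul_dotProduct, hx u' hu', smul_zero]
      | zero => intro u hu u' hu'; simp
      | add A B _ _ hA hB =>
          intro u hu u' hu'
          rw [add_mulVec, dotProduct_add, hA u hu u' hu', hB u hu u' hu', add_zero]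
      | smul c A _ hA =>
          intro u hu u' hu'
          rw [smul_mulVec, dotProduct_smul, hA u hu u' hu', smul_zero]
    exact fun u hu u' hu' A hA => key A hA u hu u' hu'

/-- Backward direction: a totally isotropic subspace gives an independent set. -/
lemma iso_to_indep (n : ℕ) (F : Type) [Field F] (G : SimpleGraph (Fin n))
    (U : Submodule F (Fin n → F))
    (hU : ∀ u ∈ U, ∀ u' ∈ U, ∀ A ∈ graphSpace n F G, u ⬝ᵥ A *ᵥ u' = 0) :
    ∃ s : Finset (Fin n), s.card = Module.finrank F U ∧
      ∀ u ∈ s, ∀ v ∈ s, ¬ G.Adj u v := by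
  classical
  set φ : Fin n → Module.Dual F U := fun i => (LinearMap.proj i).comp U.subtype with hφ
  have hco : (Submodule.span F (Set.range φ)).dualCoannihilator = ⊥ := by
    rw [eq_bot_iff]
    intro x hx
    rw [Submodule.mem_dualCoannihilator] at hx
    have : ∀ i, (x : Fin n → F) i = 0 := fun i =>
      hx (φ i) (Submodule.subset_span (Set.mem_range_self i))
    have hx0 : (x : Fin n → F) = 0 := funext this
    simpa [Submodule.mem_bot] using Subtype.ext hx0
  have htop : Submodule.span F (Set.range φ) = ⊤ := by
    apply Submodule.eq_top_of_finrank_eq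
    have h := Subspace.finrank_add_finrank_dualCoannihilator_eq (Submodule.span F (Set.range φ))
    rw [hco, finrank_bot, add_zero] at h
    rw [h, Subspace.dual_finrank_eq]
  obtain ⟨b, hbsub, hbspan, hbli⟩ := exists_linearIndependent F (Set.range φ)
  have hspan2 : ⊤ ≤ Submodule.span F (Set.range (Subtype.val : b → Module.Dual F U)) := by
    rw [Subtype.range_coe, hbspan, htop]
  set B : Module.Basis b F (Module.Dual F U) := Module.Basis.mk hbli hspan2 with hB
  haveI : Fintype b := FiniteDimensional.fintypeBasisIndex B
  have hcard : Fintype.card b = Module.finrank F U := by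
    rw [← Module.finrank_eq_card_basis B, Subspace.dual_finrank_eq]
  -- choose indices
  have hsel : ∀ f : b, ∃ i : Fin n, φ i = (f : Module.Dual F U) := fun f => hbsub f.2
  choose ψ hψ using hsel
  have hψinj : Function.Injective ψ := by
    intro f g hfg
    apply Subtype.ext
    rw [← hψ f, ← hψ g, hfg]
  -- dual vectors
  set w : b → U := fun f => (Module.evalEquiv F U).symm (B.coord f) with hw
  have hweval : ∀ (f g : b), ((w f : U) : Fin n → F) (ψ g) = if g = f then 1 else 0 := by
    intro f g
    have h1 : ((w f : U) : Fin n → F) (ψ g) = φ (ψ g) (w f) := rfl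
    rw [h1, hψ g]
    have h2 : (g : Module.Dual F U) (w f) = Module.Dual.eval F U (w f) (g : Module.Dual F U) :=
      rfl
    rw [h2]
    have h3 : Module.Dual.eval F U (w f) = B.coord f := by
      rw [hw]
      have := (Module.evalEquiv F U).apply_symm_apply (B.coord f)
      rw [← this, Module.evalEquiv_apply]
    rw [h3]
    have h4 : (g : Module.Dual F U) = B g := by rw [hB, Module.Basis.coe_mk]
    rw [h4, Module.Basis.coord_apply, Module.Basis.repr_self]
    simp [Finsupp.single_apply]
  refine ⟨Finset.univ.image ψ, ?_, ?_⟩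
  · rw [Finset.card_image_of_injective _ hψinj, Finset.card_univ, hcard]
  · intro i hi j hj hadj
    simp only [Finset.mem_image, Finset.mem_univ, true_and] at hi hj
    obtain ⟨f, rfl⟩ := hi
    obtain ⟨g, rfl⟩ := hj
    have hfg : f ≠ g := by
      rintro rfl; exact G.irrefl hadj
    have hmem : elemAlt n F (ψ f) (ψ g) ∈ graphSpace n F G :=
      Submodule.subset_span ⟨ψ f, ψ g, hadj, rfl⟩
    have h0 := hU (w f) (w f).2 (w g) (w g).2 _ hmem
    rw [dot_elemAlt, hweval f f, hweval g g, hweval g f, hweval f g] at h0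
    simp [hfg, hfg.symm] at h0

/-- The independence number of `G` equals the totally-isotropic number of `𝒜_G`:
the maximum size of an independent set of `G` equals the maximum dimension of a
totally-isotropic subspace of `𝒜_G`. -/
theorem indepNum_eq_isotropicNum (n : ℕ) (F : Type) [Field F] (G : SimpleGraph (Fin n)) :
    sSup {k : ℕ | ∃ s : Finset (Fin n), s.card = k ∧ ∀ u ∈ s, ∀ v ∈ s, ¬ G.Adj u v} =
      sSup {d : ℕ | ∃ U : Submodule F (Fin n → F), Module.finrank F U = d ∧
        ∀ u ∈ U, ∀ u' ∈ U, ∀ A ∈ graphSpace n F G, u ⬝ᵥ A *ᵥ u' = 0} := by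
  classical
  set K := {k : ℕ | ∃ s : Finset (Fin n), s.card = k ∧ ∀ u ∈ s, ∀ v ∈ s, ¬ G.Adj u v} with hK
  set D := {d : ℕ | ∃ U : Submodule F (Fin n → F), Module.finrank F U = d ∧
        ∀ u ∈ U, ∀ u' ∈ U, ∀ A ∈ graphSpace n F G, u ⬝ᵥ A *ᵥ u' = 0} with hD
  have hKne : K.Nonempty := ⟨0, ∅, by simp, by simp⟩
  have hDne : D.Nonempty := by
    refine ⟨0, ⊥, by simp, ?_⟩
    intro u hu u' hu' A hA
    rw [Submodule.mem_bot] at hu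
    simp [hu]
  have hKbdd : BddAbove K := by
    refine ⟨n, fun k hk => ?_⟩
    obtain ⟨s, rfl, _⟩ := hk
    simpa using Finset.card_le_univ s
  have hDbdd : BddAbove D := by
    refine ⟨n, fun d hd => ?_⟩
    obtain ⟨U, rfl, _⟩ := hd
    have := Submodule.finrank_le U
    simpa [Module.finrank_pi] using this
  apply le_antisymm
  · refine csSup_le hKne fun k hk => le_csSup hDbdd ?_
    obtain ⟨s, rfl, hs⟩ := hk
    obtain ⟨U, hU1, hU2⟩ := indep_to_iso n F G s hs
    exact ⟨U, hU1, hU2⟩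
  · refine csSup_le hDne fun d hd => le_csSup hKbdd ?_
    obtain ⟨U, rfl, hiso⟩ := hd
    obtain ⟨s, hs1, hs2⟩ := iso_to_indep n F G U hiso
    exact ⟨s, hs1, hs2⟩
end
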